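/- Let A and B be max-plus automata over the same finite alphabet Σ with A deterministic, and let w be a word with f_A(w) ≠ −∞ and f_B(w) ≠ −∞. Then every node of any factorisation tree on w has a non-empty set of contributors. -/

import Mathlib

open scoped Classical

/-! ### Max-plus automata -/

/-- A max-plus automaton over alphabet `Sigma` with states `Q`:
a transition matrix for each letter, an initial row vector and a final column vector,
all with entries in `ℕmax = ℕ ∪ {-∞}`, represented as `WithBot ℕ`. -/
structure MPA (Sigma : Type) (Q : Type) where
  M : Sigma → Q → Q → WithBot ℕ
  I : Q → WithBot ℕ
  F : Q → WithBot ℕ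

namespace MPA

variable {Sigma Q : Type}

/-- The matrix of a word, i.e. the product `M(w₁) ⊗ ⋯ ⊗ M(w_k)` over the
max-plus semiring. -/
def mword [Fintype Q] [DecidableEq Q] (A : MPA Sigma Q) : List Sigma → Q → Q → WithBot ℕ
  | [] => fun p q => if p = q then ((0 : ℕ) : WithBot ℕ) else ⊥
  | a :: w => fun p q => Finset.univ.sup fun r => A.M a p r + A.mword w r q

/-- The weighting function computed by a max-plus automaton:
`f_A(w) = I ⊗ M(w) ⊗ F`. -/
def func [Fintype Q] [DecidableEq Q] (A : MPA Sigma Q) (w : List Sigma) : WithBot ℕ :=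
  Finset.univ.sup fun p => Finset.univ.sup fun q => A.I p + A.mword w p q + A.F q

/-- `A` is deterministic: at most one non-`-∞` entry in `I`,
and at most one non-`-∞` entry in each row of each `M(a)`. -/
def Deterministic (A : MPA Sigma Q) : Prop :=
  (∀ p q, A.I p ≠ ⊥ → A.I q ≠ ⊥ → p = q) ∧
    ∀ a p q r, A.M a p q ≠ ⊥ → A.M a p r ≠ ⊥ → q = r

end MPA

/-- `A` is big-O of `B`: there is `c ≥ 1` with `f_A(w) ≤ c·f_B(w) + c` for all `w`. -/
def BigO {Sigma Q1 Q2 : Type} [Fintype Q1] [DecidableEq Q1] [Fintype Q2] [DecidableEq Q2]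
    (A : MPA Sigma Q1) (B : MPA Sigma Q2) : Prop :=
  ∃ c : ℕ, 1 ≤ c ∧ ∀ w : List Sigma, A.func w ≤ c • B.func w + (c : WithBot ℕ)

/-! ### The semiring Ω = {-∞, 0, 1, ∞} -/

/-- The four-element semiring `Ω = ({-∞,0,1,∞}, max, +)`. -/
inductive OSR : Type
  | bot | zero | one | inf
  deriving DecidableEq

namespace OSR

def rank : OSR → ℕ
  | bot => 0 | zero => 1 | one => 2 | inf => 3

instance : LE OSR := ⟨fun a b => a.rank ≤ b.rank⟩
instance : LT OSR := ⟨fun a b => a.rank < b.rank⟩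

/-- The max operation of `Ω`, given by the order `-∞ < 0 < 1 < ∞`. -/
def sup (a b : OSR) : OSR := if a.rank ≤ b.rank then b else a

/-- The sum operation of `Ω`. -/
def add : OSR → OSR → OSR
  | bot, _ => bot
  | _, bot => bot
  | zero, x => x
  | x, zero => x
  | one, one => one
  | one, inf => inf
  | inf, one => inf
  | inf, inf => inf

/-- Stabilisation on `Ω`. -/
def sharp : OSR → OSR
  | bot => bot | zero => zero | one => inf | inf => inf

/-- Projection into `Ω̄ = {-∞,0,1}`. -/
def bar : OSR → OSR
  | bot => bot | zero => zero | one => one | inf => one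

end OSR

/-- Max of a finite family in `Ω`. -/
def osum {n : ℕ} (f : Fin n → OSR) : OSR :=
  (List.finRange n).foldr (fun j acc => OSR.sup (f j) acc) OSR.bot

/-- Product of matrices over `Ω`. -/
def omul {n : ℕ} (M N : Fin n → Fin n → OSR) : Fin n → Fin n → OSR :=
  fun i k => osum fun j => OSR.add (M i j) (N j k)

/-- Entrywise projection of a matrix into `Ω̄`. -/
def obar {n : ℕ} (M : Fin n → Fin n → OSR) : Fin n → Fin n → OSR :=
  fun i j => (M i j).bar

/-- Projection of `ℕmax` into `Ω̄ ⊆ Ω`: `-∞ ↦ -∞`, `0 ↦ 0`, positive ↦ `1`. -/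
def barW (x : WithBot ℕ) : OSR :=
  WithBot.recBotCoe OSR.bot (fun n => if n = 0 then OSR.zero else OSR.one) x

/-- Projection of `ℕ` into `Ω̄`. -/
def barNat (n : ℕ) : OSR := if n = 0 then OSR.zero else OSR.one

/-! ### The semigroups `I_{Q,i}` and their operations -/

/-- A (non-`⊥`) element `(p, x, q, M)` of the semigroup `I_{Q,n}`. -/
structure Elem (QA : Type) (n : ℕ) where
  p : QA
  x : OSR
  q : QA
  M : Fin n → Fin n → OSR

/-- Product of two elements (assuming endpoint compatibility). -/
def eprod {QA : Type} {n : ℕ} (e f : Elem QA n) : Elem QA n :=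
  ⟨e.p, e.x.add f.x, f.q, omul e.M f.M⟩

/-- The product in `I_{Q,n}` with `⊥` (`none` is `⊥`). -/
def omulO {QA : Type} {n : ℕ} [DecidableEq QA] :
    Option (Elem QA n) → Option (Elem QA n) → Option (Elem QA n)
  | some e, some f => if e.q = f.p then some (eprod e f) else none
  | _, _ => none

/-- `(p,x,q,M)` is path-idempotent: `p = q` and `bar(M)` is idempotent. -/
def pathIdem {QA : Type} {n : ℕ} (e : Elem QA n) : Prop :=
  e.p = e.q ∧ omul (obar e.M) (obar e.M) = obar e.M

/-- `M` with all diagonal entries replaced by their stabilisation. -/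
def mdiagSharp {n : ℕ} (M : Fin n → Fin n → OSR) : Fin n → Fin n → OSR :=
  fun i j => if i = j then (M i j).sharp else M i j

/-- Stabilisation of a (path-idempotent) matrix: `M^# = M ⊗ M' ⊗ M`. -/
def mstab {n : ℕ} (M : Fin n → Fin n → OSR) : Fin n → Fin n → OSR :=
  omul (omul M (mdiagSharp M)) M

/-- Stabilisation of a (path-idempotent) element. -/
def estab {QA : Type} {n : ℕ} (e : Elem QA n) : Elem QA n :=
  ⟨e.p, e.x.sharp, e.p, mstab e.M⟩

/-- `⟨N⟩`: all off-diagonal entries replaced by their bar. -/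
def mangle {n : ℕ} (M : Fin n → Fin n → OSR) : Fin n → Fin n → OSR :=
  fun i j => if i = j then M i j else (M i j).bar

/-- Flattening of a (path-idempotent) matrix: `M^♭ = bar(M) ⊗ ⟨M³⟩ ⊗ bar(M)`. -/
def mflat {n : ℕ} (M : Fin n → Fin n → OSR) : Fin n → Fin n → OSR :=
  omul (obar M) (omul (mangle (omul M (omul M M))) (obar M))

/-- Flattening of a (path-idempotent) element. -/
def eflat {QA : Type} {n : ℕ} (e : Elem QA n) : Elem QA n :=
  ⟨e.p, e.x, e.p, mflat e.M⟩

/-- Componentwise projection of an element to `Ω̄`. -/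
def ebar {QA : Type} {n : ℕ} (e : Elem QA n) : Elem QA n :=
  ⟨e.p, e.x.bar, e.q, obar e.M⟩

/-! ### Semigroup of paths and of asymptotic behaviours -/

/-- Generators: `(p, bar x, q, bar (M_B(a)))` for each transition `p →^{a:x} q` of `A`
with `x ≠ -∞`. -/
def IsGen {Sigma QA : Type} {nB : ℕ} (A : MPA Sigma QA) (B : MPA Sigma (Fin nB))
    (e : Elem QA nB) : Prop :=
  ∃ (a : Sigma) (p q : QA) (x : ℕ), A.M a p q = ((x : ℕ) : WithBot ℕ) ∧
    e = ⟨p, barNat x, q, fun i j => barW (B.M a i j)⟩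

/-- The semigroup of paths `S̄_{A,B}` (as a subset of `Ī_{Q_A,|Q_B|}`, including `⊥`):
generated by the generators under the product. -/
inductive InPathsO {Sigma QA : Type} {nB : ℕ} [DecidableEq QA]
    (A : MPA Sigma QA) (B : MPA Sigma (Fin nB)) : Option (Elem QA nB) → Prop
  | gen : ∀ e, IsGen A B e → InPathsO A B (some e)
  | mul : ∀ x y, InPathsO A B x → InPathsO A B y → InPathsO A B (omulO x y)

/-- The semigroup of asymptotic behaviours `I_{A,B}`: generated by the generators and
closed under product, stabilisation and flattening. -/
inductive InAsympO {Sigma QA : Type} {nB : ℕ} [DecidableEq QA]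
    (A : MPA Sigma QA) (B : MPA Sigma (Fin nB)) : Option (Elem QA nB) → Prop
  | gen : ∀ e, IsGen A B e → InAsympO A B (some e)
  | mul : ∀ x y, InAsympO A B x → InAsympO A B y → InAsympO A B (omulO x y)
  | stab : ∀ e, InAsympO A B (some e) → pathIdem e → InAsympO A B (some (estab e))
  | flat : ∀ e, InAsympO A B (some e) → pathIdem e → InAsympO A B (some (eflat e))

/-- The cardinality `|S̄_{A,B}|` of the semigroup of paths. -/
noncomputable def sizeS {Sigma QA : Type} {nB : ℕ} [DecidableEq QA]
    (A : MPA Sigma QA) (B : MPA Sigma (Fin nB)) : ℕ :=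
  Set.ncard {x : Option (Elem QA nB) | InPathsO A B x}

/-- `(p,x,q,M)` is a witness of non-domination: `p` initial in `A`, `q` final in `A`,
`x = ∞` and `bar(I_B) ⊗ M ⊗ bar(F_B) < ∞`. -/
def IsWitness {Sigma QA : Type} {nB : ℕ} (A : MPA Sigma QA) (B : MPA Sigma (Fin nB))
    (e : Elem QA nB) : Prop :=
  A.I e.p ≠ ⊥ ∧ A.F e.q ≠ ⊥ ∧ e.x = OSR.inf ∧
    osum (fun i => osum fun j =>
      OSR.add (barW (B.I i)) (OSR.add (e.M i j) (barW (B.F j)))) ≠ OSR.inf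

/-! ### Tractable witnesses -/

/-- Membership of an extended element (`none` is the adjoined identity `𝟙`) in `S̄_{A,B}`. -/
def InPathsOpt {Sigma QA : Type} {nB : ℕ} [DecidableEq QA]
    (A : MPA Sigma QA) (B : MPA Sigma (Fin nB)) : Option (Elem QA nB) → Prop
  | none => True
  | some e => InPathsO A B (some e)

/-- `g ⊗ e ⊗ g'` where `g, g'` may be the adjoined identity `𝟙` (i.e. `none`). -/
def extWrap {QA : Type} {n : ℕ} (g : Option (Elem QA n)) (e : Elem QA n)
    (g' : Option (Elem QA n)) : Elem QA n :=
  match g, g' with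
  | none, none => e
  | some a, none => eprod a e
  | none, some b => eprod e b
  | some a, some b => eprod a (eprod e b)

/-- `TractCore A B k e`: `e` has the form
`(g_1 (⋯ (g_{k-1} (g_k)^# g'_{k-1})^♭ ⋯)^♭ g'_1)^♭` with `k` flattenings, built from
elements of `S̄_{A,B} ∪ {𝟙}`. -/
inductive TractCore {Sigma QA : Type} {nB : ℕ} [DecidableEq QA]
    (A : MPA Sigma QA) (B : MPA Sigma (Fin nB)) : ℕ → Elem QA nB → Prop
  | base : ∀ e, InPathsO A B (some e) → pathIdem e → TractCore A B 0 (estab e)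
  | step : ∀ k e g g', TractCore A B k e →
      InPathsOpt A B g → InPathsOpt A B g' →
      (∀ a, g = some a → a.q = e.p) → (∀ b, g' = some b → e.q = b.p) →
      pathIdem (extWrap g e g') →
      TractCore A B (k + 1) (eflat (extWrap g e g'))

/-- A tractable witness of non-domination. -/
def IsTractableWitness {Sigma QA : Type} {nB : ℕ} [DecidableEq QA]
    (A : MPA Sigma QA) (B : MPA Sigma (Fin nB)) (wit : Elem QA nB) : Prop :=
  IsWitness A B wit ∧
    ∃ (m : ℕ) (e : Elem QA nB) (g g' : Option (Elem QA nB)),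
      m + 1 ≤ 3 * sizeS A B ∧
      TractCore A B m e ∧ InPathsOpt A B g ∧ InPathsOpt A B g' ∧
      (∀ a, g = some a → a.q = e.p) ∧ (∀ b, g' = some b → e.q = b.p) ∧
      wit = extWrap g e g'

/-! ### Factorisation trees -/

/-- Finite ordered trees labelled by elements of `Ī_{Q_A,|Q_B|}`. -/
inductive FT (QA : Type) (n : ℕ) : Type
  | leaf : Elem QA n → FT QA n
  | node : Elem QA n → List (FT QA n) → FT QA n

namespace FT

variable {QA : Type} {n : ℕ}

/-- The label of the root of a tree. -/
def label : FT QA n → Elem QA n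
  | leaf e => e
  | node e _ => e

mutual
  /-- The list of leaf labels of a tree, in order. -/
  def leaves : FT QA n → List (Elem QA n)
    | .leaf e => [e]
    | .node _ cs => leavesList cs
  def leavesList : List (FT QA n) → List (Elem QA n)
    | [] => []
    | t :: ts => leaves t ++ leavesList ts
end

mutual
  /-- Height of a tree: leaves have height `0`. -/
  def height : FT QA n → ℕ
    | .leaf _ => 0
    | .node _ cs => heightList cs + 1
  def heightList : List (FT QA n) → ℕ
    | [] => 0
    | t :: ts => max (height t) (heightList ts)
end

/-- The `i`-th child. -/
def childAt : FT QA n → ℕ → Option (FT QA n)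
  | leaf _, _ => none
  | node _ cs, i => cs[i]?

/-- The subtree at a path (a list of child indices from the root). -/
def subtreeAt : FT QA n → List ℕ → Option (FT QA n)
  | t, [] => some t
  | t, i :: rest => (t.childAt i).bind fun c => subtreeAt c rest

/-- Well-formed factorisation trees: internal nodes have ≥ 2 children, are labelled by the
product of the children's labels (with compatible endpoints), and nodes with ≥ 3 children
are idempotent nodes: all children and the node itself carry one same idempotent label. -/
inductive WF : FT QA n → Prop
  | leaf : ∀ e, WF (FT.leaf e)
  | node : ∀ (lbl : Elem QA n) (cs : List (FT QA n)),
      2 ≤ cs.length →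
      (∀ c ∈ cs, WF c) →
      List.Chain' (fun a b => a.q = b.p) (cs.map FT.label) →
      (∀ h t, cs.map FT.label = h :: t → lbl = t.foldl eprod h) →
      (3 ≤ cs.length → lbl.p = lbl.q ∧ eprod lbl lbl = lbl ∧ ∀ c ∈ cs, FT.label c = lbl) →
      WF (FT.node lbl cs)

end FT

/-- One top-down step of the computation of contributors: from the contributor set `C` of a
node with children `cs`, the contributor set of the `i`-th child. -/
def contribStep {QA : Type} {n : ℕ} (cs : List (FT QA n)) (C : Set (Fin n × Fin n)) (i : ℕ) :
    Set (Fin n × Fin n) :=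
  match cs with
  | [c1, c2] =>
      let M := (FT.label c1).M
      let P := (FT.label c2).M
      if i = 0 then
        {il | ∃ j, (il.1, j) ∈ C ∧ P il.2 j ≠ OSR.bot ∧ M il.1 il.2 ≠ OSR.bot}
      else
        {lj | ∃ a, (a, lj.2) ∈ C ∧ M a lj.1 ≠ OSR.bot ∧ P lj.1 lj.2 ≠ OSR.bot}
  | c :: _ :: _ :: _ =>
      let M := (FT.label c).M
      if i = 0 then
        {il | ∃ j, (il.1, j) ∈ C ∧ M il.2 j ≠ OSR.bot ∧ M il.1 il.2 ≠ OSR.bot}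
      else if i = cs.length - 1 then
        {lj | ∃ a, (a, lj.2) ∈ C ∧ M a lj.1 ≠ OSR.bot ∧ M lj.1 lj.2 ≠ OSR.bot}
      else
        {lk | ∃ a b, (a, b) ∈ C ∧ M a lk.1 ≠ OSR.bot ∧ M lk.2 b ≠ OSR.bot ∧
              M lk.1 lk.2 ≠ OSR.bot ∧ M lk.2 lk.1 ≠ OSR.bot}
  | _ => ∅

/-- Contributor set of the node at path `π`, starting from the set `C` at the root. -/
def contribAt {QA : Type} {n : ℕ} : FT QA n → Set (Fin n × Fin n) → List ℕ → Set (Fin n × Fin n)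
  | _, C, [] => C
  | FT.leaf _, _, _ :: _ => ∅
  | FT.node _ cs, C, i :: rest =>
      match cs[i]? with
      | none => ∅
      | some c => contribAt c (contribStep cs C i) rest

/-- The contributor set of the root: pairs `(i,j)` with `i` initial in `B`, `j` final in `B`
and `M_{i,j} ≠ -∞`. -/
def rootContrib {Sigma QA : Type} {n : ℕ} (B : MPA Sigma (Fin n)) (t : FT QA n) :
    Set (Fin n × Fin n) :=
  {ij | B.I ij.1 ≠ ⊥ ∧ B.F ij.2 ≠ ⊥ ∧ (FT.label t).M ij.1 ij.2 ≠ OSR.bot}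

/-- The contributor set of the node at path `π` of the tree `t`. -/
def contributors {Sigma QA : Type} {n : ℕ} (B : MPA Sigma (Fin n)) (t : FT QA n)
    (π : List ℕ) : Set (Fin n × Fin n) :=
  contribAt t (rootContrib B t) π

/-- `PathLeaves A B p w xs ls q`: `ls` is the list `α_w(w₁), …, α_w(w_k)` associated with the
run of `A` on `w` from `p` to `q` with transition weights `xs`. -/
def PathLeaves {Sigma QA : Type} {nB : ℕ} (A : MPA Sigma QA) (B : MPA Sigma (Fin nB)) :
    QA → List Sigma → List ℕ → List (Elem QA nB) → QA → Prop
  | p, [], [], [], q => p = q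
  | p, a :: w, x :: xs, e :: ls, q =>
      e.p = p ∧ A.M a p e.q = ((x : ℕ) : WithBot ℕ) ∧ e.x = barNat x ∧
      (e.M = fun i j => barW (B.M a i j)) ∧ PathLeaves A B e.q w xs ls q
  | _, _, _, _, _ => False

/-- `t` is a factorisation tree on the word `w` (for the accepting run of `A` on `w`). -/
def IsFactTreeOn {Sigma QA : Type} {nB : ℕ} [Fintype QA] [DecidableEq QA]
    (A : MPA Sigma QA) (B : MPA Sigma (Fin nB)) (w : List Sigma) (t : FT QA nB) : Prop :=
  FT.WF t ∧ ∃ (p q : QA) (xs : List ℕ),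
    A.I p ≠ ⊥ ∧ A.F q ≠ ⊥ ∧ PathLeaves A B p w xs (FT.leaves t) q

/-- The node of `t` at path `π` is a fault. -/
def IsFaultAt {Sigma QA : Type} {nB : ℕ} (B : MPA Sigma (Fin nB)) (t : FT QA nB)
    (π : List ℕ) : Prop :=
  ∃ σ i, π = σ ++ [i] ∧
    ∃ lbl cs, FT.subtreeAt t σ = some (FT.node lbl cs) ∧ 3 ≤ cs.length ∧
      0 < i ∧ i < cs.length - 1 ∧
      ∃ c, cs[i]? = some c ∧ (FT.label c).x = OSR.one ∧
        ∀ ij ∈ contributors B t π, (FT.label c).M ij.1 ij.2 = OSR.zero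

/-- Number of leaves strictly to the left of the node at path `π`. -/
def offsetAt {QA : Type} {n : ℕ} : FT QA n → List ℕ → ℕ
  | _, [] => 0
  | FT.leaf _, _ :: _ => 0
  | FT.node _ cs, i :: rest =>
      ((cs.take i).map fun c => (FT.leaves c).length).sum +
        match cs[i]? with
        | none => 0
        | some c => offsetAt c rest

/-- Height of the node at path `π`. -/
def heightAt {QA : Type} {n : ℕ} (t : FT QA n) (π : List ℕ) : ℕ :=
  match FT.subtreeAt t π with
  | some c => FT.height c
  | none => 0

/-- The β-labelling: `beta t π` is the β-label of the root of `t`, where `π` is the path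
from the root of `t` down to the fault `ν₁`. -/
def beta {QA : Type} {n : ℕ} : FT QA n → List ℕ → Elem QA n
  | t, [] => FT.label t
  | FT.leaf e, _ :: _ => e
  | FT.node lbl cs, i :: rest =>
      match cs[i]? with
      | none => lbl
      | some c =>
        match rest with
        | [] => estab (FT.label c)
        | j :: rest' =>
          let inner := beta c (j :: rest')
          if cs.length = 2 then
            (if i = 0 then eprod inner ((cs[1]?.map FT.label).getD lbl)
             else eprod ((cs[0]?.map FT.label).getD lbl) inner)
          else
            if i = 0 then eprod inner (FT.label c)
            else if i = cs.length - 1 then eprod (FT.label c) inner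
            else eflat inner

/-! ### Auxiliary development -/

section Aux

instance : Zero OSR := ⟨.bot⟩
instance : One OSR := ⟨.zero⟩
instance : Add OSR := ⟨OSR.sup⟩
instance : Mul OSR := ⟨OSR.add⟩

instance : CommSemiring OSR where
  add_assoc := fun a b c => by cases a <;> cases b <;> cases c <;> rfl
  add_comm := fun a b => by cases a <;> cases b <;> rfl
  zero_add := fun a => by cases a <;> rfl
  add_zero := fun a => by cases a <;> rfl
  mul_assoc := fun a b c => by cases a <;> cases b <;> cases c <;> rfl
  one_mul := fun a => by cases a <;> rfl
  mul_one := fun a => by cases a <;> rfl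
  left_distrib := fun a b c => by cases a <;> cases b <;> cases c <;> rfl
  right_distrib := fun a b c => by cases a <;> cases b <;> cases c <;> rfl
  zero_mul := fun a => by cases a <;> rfl
  mul_zero := fun a => by cases a <;> rfl
  mul_comm := fun a b => by cases a <;> cases b <;> rfl
  nsmul := nsmulRec
  npow := npowRec

lemma osum_eq_sum {n : ℕ} (f : Fin n → OSR) : osum f = ∑ j, f j := by
  rw [Fin.sum_univ_def, List.sum_eq_foldr, List.foldr_map]
  rfl

lemma omul_eq_mul {n : ℕ} (M N : Fin n → Fin n → OSR) (i k : Fin n) :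
    omul M N i k = (Matrix.of M * Matrix.of N) i k := by
  rw [Matrix.mul_apply]; exact osum_eq_sum _

lemma omul_assoc {n : ℕ} (M N P : Fin n → Fin n → OSR) :
    omul (omul M N) P = omul M (omul N P) := by
  have h1 : omul M N = fun i k => (Matrix.of M * Matrix.of N) i k := by
    funext i k; exact omul_eq_mul M N i k
  have h2 : omul N P = fun i k => (Matrix.of N * Matrix.of P) i k := by
    funext i k; exact omul_eq_mul N P i k
  funext i k
  rw [h1, h2, omul_eq_mul, omul_eq_mul]
  show (Matrix.of M * Matrix.of N * Matrix.of P) i k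
      = (Matrix.of M * (Matrix.of N * Matrix.of P)) i k
  rw [Matrix.mul_assoc]

lemma OSR.sup_eq_bot_iff (a b : OSR) : OSR.sup a b = .bot ↔ a = .bot ∧ b = .bot := by
  cases a <;> cases b <;> simp [OSR.sup, OSR.rank]

lemma OSR.add_ne_bot_iff (a b : OSR) : OSR.add a b ≠ .bot ↔ a ≠ .bot ∧ b ≠ .bot := by
  cases a <;> cases b <;> simp [OSR.add]

lemma foldr_sup_eq_bot {ι : Type*} (l : List ι) (f : ι → OSR) :
    (l.foldr (fun j acc => (f j).sup acc) .bot = .bot) ↔ ∀ j ∈ l, f j = .bot := by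
  induction l with
  | nil => simp
  | cons a l ih => simp [OSR.sup_eq_bot_iff, ih]

lemma osum_ne_bot {n : ℕ} (f : Fin n → OSR) : osum f ≠ .bot ↔ ∃ j, f j ≠ .bot := by
  unfold osum
  constructor
  · intro h
    by_contra hc
    push_neg at hc
    exact h ((foldr_sup_eq_bot _ _).mpr fun j _ => hc j)
  · rintro ⟨j, hj⟩ h
    exact hj ((foldr_sup_eq_bot _ _).mp h j (List.mem_finRange j))

lemma omul_ne_bot {n : ℕ} (M N : Fin n → Fin n → OSR) (i k : Fin n) :
    omul M N i k ≠ .bot ↔ ∃ j, M i j ≠ .bot ∧ N j k ≠ .bot := by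
  unfold omul
  rw [osum_ne_bot]
  exact exists_congr fun j => OSR.add_ne_bot_iff _ _

lemma barW_ne_bot (x : WithBot ℕ) : barW x ≠ .bot ↔ x ≠ ⊥ := by
  induction x using WithBot.recBotCoe with
  | bot => simp [barW]
  | coe n =>
    simp only [barW, WithBot.recBotCoe_coe]
    split <;> simp

/-! Products of lists of `Elem`s. -/

variable {QA : Type} {nB : ℕ}

lemma eprod_assoc (e f g : Elem QA nB) : eprod (eprod e f) g = eprod e (eprod f g) := by
  have hx : (e.x.add f.x).add g.x = e.x.add (f.x.add g.x) := by
    cases e.x <;> cases f.x <;> cases g.x <;> rfl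
  simp [eprod, hx, omul_assoc]

lemma foldl_eprod_hom : ∀ (l : List (Elem QA nB)) (a b : Elem QA nB),
    List.foldl eprod (eprod a b) l = eprod a (List.foldl eprod b l) := by
  intro l
  induction l with
  | nil => intro a b; rfl
  | cons c l ih =>
    intro a b
    show List.foldl eprod (eprod (eprod a b) c) l = eprod a (List.foldl eprod (eprod b c) l)
    rw [eprod_assoc, ih]

lemma foldl_eprod_cons (l : List (Elem QA nB)) (a b : Elem QA nB) :
    List.foldl eprod a (b :: l) = eprod a (List.foldl eprod b l) :=
  foldl_eprod_hom l a b

lemma foldl_eprod_append (a b : Elem QA nB) (l1 l2 : List (Elem QA nB)) :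
    List.foldl eprod a (l1 ++ b :: l2) = eprod (List.foldl eprod a l1) (List.foldl eprod b l2) := by
  rw [List.foldl_append]
  exact foldl_eprod_cons _ _ _

/-! The label of a well-formed tree is the product of its leaves. -/

lemma FT.height_le_of_mem {c : FT QA nB} : ∀ {cs : List (FT QA nB)}, c ∈ cs →
    FT.height c ≤ FT.heightList cs := by
  intro cs
  induction cs with
  | nil => intro h; cases h
  | cons d cs ih =>
    intro h
    rw [show FT.heightList (d :: cs) = max (FT.height d) (FT.heightList cs) from rfl]
    rcases List.mem_cons.mp h with h | h
    · subst h; exact le_max_left _ _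
    · exact le_trans (ih h) (le_max_right _ _)

/-- Folding leaves over a list of trees each of which satisfies the property. -/
lemma leavesList_fold (cs : List (FT QA nB)) (hcs : cs ≠ [])
    (H : ∀ c ∈ cs, ∃ h tl, FT.leaves c = h :: tl ∧ FT.label c = List.foldl eprod h tl) :
    ∃ h tl, FT.leavesList cs = h :: tl ∧
      ∀ lh lt, cs.map FT.label = lh :: lt →
        List.foldl eprod h tl = List.foldl eprod lh lt := by
  induction cs with
  | nil => exact absurd rfl hcs
  | cons c cs ih =>
    obtain ⟨h, tl, hl, hf⟩ := H c List.mem_cons_self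
    by_cases hne : cs = []
    · subst hne
      refine ⟨h, tl, ?_, ?_⟩
      · rw [show FT.leavesList [c] = FT.leaves c ++ FT.leavesList [] from rfl, hl,
          show FT.leavesList ([] : List (FT QA nB)) = [] from rfl, List.append_nil]
      · intro lh lt hmap
        simp only [List.map_cons, List.map_nil] at hmap
        cases hmap
        simpa using hf.symm
    · obtain ⟨h', tl', hl', hf'⟩ := ih hne (fun c hc => H c (List.mem_cons_of_mem _ hc))
      refine ⟨h, tl ++ h' :: tl', ?_, ?_⟩
      · rw [show FT.leavesList (c :: cs) = FT.leaves c ++ FT.leavesList cs from rfl, hl, hl']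
        rfl
      · intro lh lt hmap
        simp only [List.map_cons] at hmap
        cases hmap
        obtain ⟨ch, ct, hct⟩ : ∃ ch ct, cs.map FT.label = ch :: ct := by
          cases hcs2 : cs.map FT.label with
          | nil => exact absurd (List.map_eq_nil_iff.mp hcs2) hne
          | cons x xs => exact ⟨x, xs, rfl⟩
        rw [foldl_eprod_append, hf, hf' ch ct hct, hct, foldl_eprod_cons]

lemma label_eq_fold_aux : ∀ (N : ℕ) (t : FT QA nB), FT.height t ≤ N → FT.WF t →
    ∃ h tl, FT.leaves t = h :: tl ∧ FT.label t = List.foldl eprod h tl := by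
  intro N
  induction N with
  | zero =>
    intro t hht hwf
    cases t with
    | leaf e => exact ⟨e, [], rfl, rfl⟩
    | node lbl cs => simp [FT.height] at hht
  | succ N ih =>
    intro t hht hwf
    cases t with
    | leaf e => exact ⟨e, [], rfl, rfl⟩
    | node lbl cs =>
      cases hwf with
      | node lbl cs hlen hwfc hchain hprod hidem =>
        have hne : cs ≠ [] := by
          intro h; subst h; simp at hlen
        have hH : ∀ c ∈ cs, ∃ h tl, FT.leaves c = h :: tl ∧ FT.label c = List.foldl eprod h tl := by
          intro c hc
          refine ih c ?_ (hwfc c hc)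
          have h1 := FT.height_le_of_mem hc
          have h2 : FT.heightList cs + 1 ≤ N + 1 := hht
          omega
        obtain ⟨h, tl, hl, hf⟩ := leavesList_fold cs hne hH
        obtain ⟨lh, lt, hmap⟩ : ∃ lh lt, cs.map FT.label = lh :: lt := by
          cases hcs2 : cs.map FT.label with
          | nil => exact absurd (List.map_eq_nil_iff.mp hcs2) hne
          | cons x xs => exact ⟨x, xs, rfl⟩
        refine ⟨h, tl, hl, ?_⟩
        show lbl = List.foldl eprod h tl
        rw [hf lh lt hmap]
        exact hprod lh lt hmap

lemma label_eq_fold (t : FT QA nB) (hwf : FT.WF t) :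
    ∃ h tl, FT.leaves t = h :: tl ∧ FT.label t = List.foldl eprod h tl :=
  label_eq_fold_aux (FT.height t) t le_rfl hwf

end Aux
section Aux2

variable {QA : Type} {nB : ℕ}

lemma chain_entry {n : ℕ} (M : Fin n → Fin n → OSR) (hM : omul M M = M) :
    ∀ (len : ℕ) (f : ℕ → Fin n), 0 < len → (∀ i < len, M (f i) (f (i+1)) ≠ .bot) →
      M (f 0) (f len) ≠ .bot := by
  intro len
  induction len with
  | zero => intro f h; exact absurd h (lt_irrefl 0)
  | succ len ih =>
    intro f _ hedge
    by_cases h0 : len = 0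
    · subst h0; exact hedge 0 (by omega)
    · have h1 := ih f (Nat.pos_of_ne_zero h0) (fun i hi => hedge i (by omega))
      have h2 := hedge len (by omega)
      have h3 : omul M M (f 0) (f (len+1)) ≠ .bot :=
        (omul_ne_bot _ _ _ _).mpr ⟨f len, h1, h2⟩
      rwa [hM] at h3

lemma entry_chain {n : ℕ} (M : Fin n → Fin n → OSR) (hM : omul M M = M) :
    ∀ (m : ℕ) (a b : Fin n), 0 < m → M a b ≠ .bot →
      ∃ f : ℕ → Fin n, f 0 = a ∧ f m = b ∧ ∀ i < m, M (f i) (f (i+1)) ≠ .bot := by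
  intro m
  induction m with
  | zero => intro a b h; exact absurd h (lt_irrefl 0)
  | succ m ih =>
    intro a b _ hab
    by_cases h0 : m = 0
    · subst h0
      refine ⟨fun i => if i = 0 then a else b, by simp, by simp, ?_⟩
      intro i hi
      have hi0 : i = 0 := by omega
      subst hi0
      simpa using hab
    · have hab2 : omul M M a b ≠ .bot := by rwa [hM]
      obtain ⟨r, har, hrb⟩ := (omul_ne_bot _ _ _ _).mp hab2
      obtain ⟨f, hf0, hfm, hedge⟩ := ih r b (Nat.pos_of_ne_zero h0) hrb
      refine ⟨fun i => match i with | 0 => a | i+1 => f i, rfl, hfm, ?_⟩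
      intro i hi
      match i with
      | 0 => simpa [hf0] using har
      | Nat.succ i => exact hedge i (by omega)

lemma idem_middle {n : ℕ} (M : Fin n → Fin n → OSR) (hM : omul M M = M) {a b : Fin n}
    (hab : M a b ≠ .bot) :
    ∃ ℓ k, M a ℓ ≠ .bot ∧ M k b ≠ .bot ∧ M ℓ k ≠ .bot ∧ M k ℓ ≠ .bot := by
  obtain ⟨f, hf0, hfm, hedge⟩ := entry_chain M hM (n+2) a b (by omega) hab
  have key : ∀ s t : ℕ, 1 ≤ s → s < t → t ≤ n+1 → f s = f t →
      ∃ ℓ k, M a ℓ ≠ .bot ∧ M k b ≠ .bot ∧ M ℓ k ≠ .bot ∧ M k ℓ ≠ .bot := by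
    intro s t hs hst ht hfst
    refine ⟨f s, f (s+1), ?_, ?_, hedge s (by omega), ?_⟩
    · have h1 := chain_entry M hM s f hs (fun i hi => hedge i (by omega))
      rwa [hf0] at h1
    · have h2 := chain_entry M hM (n+2-(s+1)) (fun i => f (s+1+i)) (by omega)
        (fun i hi => hedge (s+1+i) (by omega))
      rw [show s+1+0 = s+1 from rfl, show s+1+(n+2-(s+1)) = n+2 from by omega, hfm] at h2
      exact h2
    · by_cases hts : t = s+1
      · subst hts
        have e := hedge s (by omega)
        rw [← hfst] at e
        rw [← hfst]
        exact e
      · have h3 := chain_entry M hM (t-(s+1)) (fun i => f (s+1+i)) (by omega)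
          (fun i hi => hedge (s+1+i) (by omega))
        rw [show s+1+0 = s+1 from rfl, show s+1+(t-(s+1)) = t from by omega, ← hfst] at h3
        exact h3
  obtain ⟨x, y, hxy, hfeq⟩ := Fintype.exists_ne_map_eq_of_card_lt
      (fun x : Fin (n+1) => f (x.1+1)) (by simp)
  rcases Nat.lt_or_ge x.1 y.1 with h | h
  · exact key (x.1+1) (y.1+1) (by omega) (by omega) (by omega) hfeq
  · have h' : y.1 < x.1 := by
      rcases Nat.lt_or_ge y.1 x.1 with h' | h'
      · exact h'
      · exact absurd (Fin.ext (by omega)) hxy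
    exact key (y.1+1) (x.1+1) (by omega) (by omega) (by omega) hfeq.symm

lemma contribStep_key (lbl : Elem QA nB) (cs : List (FT QA nB)) (C : Set (Fin nB × Fin nB))
    (hlen : 2 ≤ cs.length)
    (hprod : ∀ h t, cs.map FT.label = h :: t → lbl = List.foldl eprod h t)
    (hidem : 3 ≤ cs.length → lbl.p = lbl.q ∧ eprod lbl lbl = lbl ∧ ∀ c ∈ cs, FT.label c = lbl)
    (hC : ∃ ij ∈ C, lbl.M ij.1 ij.2 ≠ OSR.bot)
    (i : ℕ) (ch : FT QA nB) (hch : cs[i]? = some ch) :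
    ∃ ij ∈ contribStep cs C i, (FT.label ch).M ij.1 ij.2 ≠ OSR.bot := by
  obtain ⟨⟨a, b⟩, habC, hab⟩ := hC
  match cs with
  | [] => simp at hlen
  | [c1] => simp at hlen
  | [c1, c2] =>
    have hl : lbl = eprod (FT.label c1) (FT.label c2) := by
      simpa using hprod (FT.label c1) [FT.label c2] (by simp)
    have hab' : omul (FT.label c1).M (FT.label c2).M a b ≠ OSR.bot := by
      rw [hl] at hab; exact hab
    obtain ⟨ℓ, h1, h2⟩ := (omul_ne_bot _ _ _ _).mp hab'
    match i with
    | 0 =>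
      have hc1 : ch = c1 := by simpa using hch.symm
      subst hc1
      refine ⟨(a, ℓ), ?_, h1⟩
      simp only [contribStep, if_pos rfl, Set.mem_setOf_eq]
      exact ⟨b, habC, h2, h1⟩
    | 1 =>
      have hc2 : ch = c2 := by simpa using hch.symm
      subst hc2
      refine ⟨(ℓ, b), ?_, h2⟩
      simp only [contribStep, Set.mem_setOf_eq, if_neg (by omega : (1:ℕ) ≠ 0)]
      exact ⟨a, habC, h1, h2⟩
    | (i+2) => simp at hch
  | c1 :: c2 :: c3 :: rest =>
    have h3 : 3 ≤ (c1 :: c2 :: c3 :: rest).length := by simp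
    obtain ⟨hpq, hii, hlab⟩ := hidem h3
    have hMM : omul lbl.M lbl.M = lbl.M := congrArg Elem.M hii
    have hlabch : FT.label ch = lbl := hlab ch (List.mem_of_getElem? hch)
    have hlabc1 : FT.label c1 = lbl := hlab c1 (by simp)
    have hab2 : omul lbl.M lbl.M a b ≠ OSR.bot := by rw [hMM]; exact hab
    by_cases hi0 : i = 0
    · subst hi0
      obtain ⟨ℓ, h1, h2⟩ := (omul_ne_bot _ _ _ _).mp hab2
      refine ⟨(a, ℓ), ?_, by rw [hlabch]; exact h1⟩
      simp only [contribStep, if_pos rfl, Set.mem_setOf_eq, hlabc1]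
      exact ⟨b, habC, h2, h1⟩
    · by_cases hilast : i = (c1 :: c2 :: c3 :: rest).length - 1
      · obtain ⟨ℓ, h1, h2⟩ := (omul_ne_bot _ _ _ _).mp hab2
        refine ⟨(ℓ, b), ?_, by rw [hlabch]; exact h2⟩
        simp only [contribStep, Set.mem_setOf_eq, if_neg hi0, if_pos hilast, hlabc1]
        exact ⟨a, habC, h1, h2⟩
      · obtain ⟨ℓ, k, h1, h2, h3', h4⟩ := idem_middle lbl.M hMM hab
        refine ⟨(ℓ, k), ?_, by rw [hlabch]; exact h3'⟩
        simp only [contribStep, Set.mem_setOf_eq, if_neg hi0, if_neg hilast, hlabc1]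
        exact ⟨a, b, habC, h1, h2, h3', h4⟩

lemma contrib_inv :
    ∀ (π : List ℕ) (t : FT QA nB) (C : Set (Fin nB × Fin nB)), FT.WF t →
      (∃ ij ∈ C, (FT.label t).M ij.1 ij.2 ≠ OSR.bot) →
      ∀ c, FT.subtreeAt t π = some c →
        ∃ ij ∈ contribAt t C π, (FT.label c).M ij.1 ij.2 ≠ OSR.bot := by
  intro π
  induction π with
  | nil =>
    intro t C hwf hC c hc
    have ht : t = c := by simpa [FT.subtreeAt] using hc
    subst ht
    have heq : contribAt t C [] = C := by cases t <;> rfl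
    rwa [heq]
  | cons i rest ih =>
    intro t C hwf hC c hc
    cases t with
    | leaf e => simp [FT.subtreeAt, FT.childAt] at hc
    | node lbl cs =>
      have hc' : (cs[i]?).bind (fun ch => FT.subtreeAt ch rest) = some c := hc
      obtain ⟨ch, hch, hsub⟩ := Option.bind_eq_some_iff.mp hc'
      have hmem : ch ∈ cs := List.mem_of_getElem? hch
      cases hwf with
      | node _ _ hlen hwfc hchain hprod hidem =>
        have hkey : ∃ ij ∈ contribStep cs C i, (FT.label ch).M ij.1 ij.2 ≠ OSR.bot :=
          contribStep_key lbl cs C hlen hprod hidem hC i ch hch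
        have hres := ih ch (contribStep cs C i) (hwfc ch hmem) hkey c hsub
        have heq : contribAt (FT.node lbl cs) C (i :: rest)
            = contribAt ch (contribStep cs C i) rest := by
          simp only [contribAt, hch]
        rwa [heq]

end Aux2
section Aux3

variable {Sigma QA : Type} {nB : ℕ}

lemma mword_nil_ne (B : MPA Sigma (Fin nB)) (i j : Fin nB) :
    B.mword [] i j ≠ ⊥ ↔ i = j := by
  show (if i = j then ((0:ℕ) : WithBot ℕ) else ⊥) ≠ ⊥ ↔ i = j
  split <;> simp_all

lemma mword_cons_ne (B : MPA Sigma (Fin nB)) (a : Sigma) (w : List Sigma) (i j : Fin nB) :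
    B.mword (a :: w) i j ≠ ⊥ ↔ ∃ r, B.M a i r ≠ ⊥ ∧ B.mword w r j ≠ ⊥ := by
  have he : B.mword (a :: w) i j = Finset.univ.sup fun r => B.M a i r + B.mword w r j := rfl
  rw [he, ← not_iff_not]
  push_neg
  rw [Finset.sup_eq_bot_iff]
  constructor
  · intro h r
    rcases WithBot.add_eq_bot.mp (h r (Finset.mem_univ r)) with h' | h'
    · exact fun hc => absurd h' hc
    · exact fun _ => h'
  · intro h r _
    rw [WithBot.add_eq_bot]
    by_cases hc : B.M a i r = ⊥
    · exact Or.inl hc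
    · exact Or.inr (h r hc)

lemma fold_support [Fintype QA] [DecidableEq QA] (A : MPA Sigma QA) (B : MPA Sigma (Fin nB)) :
    ∀ (w : List Sigma) (p : QA) (xs : List ℕ) (h : Elem QA nB) (tl : List (Elem QA nB)) (q : QA),
      PathLeaves A B p w xs (h :: tl) q →
      ∀ i j, ((List.foldl eprod h tl).M i j ≠ OSR.bot ↔ B.mword w i j ≠ ⊥) := by
  intro w
  induction w with
  | nil =>
    intro p xs h tl q hpl
    cases xs with
    | nil => exact hpl.elim
    | cons x xs => exact hpl.elim
  | cons a w iha =>
    intro p xs h tl q hpl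
    cases xs with
    | nil => exact hpl.elim
    | cons x xs =>
      obtain ⟨hep, hMa, hex, heM, hrest⟩ := hpl
      intro i j
      cases w with
      | nil =>
        cases tl with
        | cons h' tl' =>
          cases xs with
          | nil => exact hrest.elim
          | cons _ _ => exact hrest.elim
        | nil =>
          show h.M i j ≠ OSR.bot ↔ _
          rw [heM]
          rw [show (fun i j => barW (B.M a i j)) i j = barW (B.M a i j) from rfl]
          rw [barW_ne_bot, mword_cons_ne]
          constructor
          · intro hne
            exact ⟨j, hne, by rw [mword_nil_ne]⟩
          · rintro ⟨r, h1, h2⟩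
            rw [mword_nil_ne] at h2
            subst h2
            exact h1
      | cons b w' =>
        cases tl with
        | nil =>
          cases xs with
          | nil => exact hrest.elim
          | cons _ _ => exact hrest.elim
        | cons h' tl' =>
          rw [foldl_eprod_cons]
          show omul h.M ((List.foldl eprod h' tl').M) i j ≠ OSR.bot ↔ _
          rw [omul_ne_bot, mword_cons_ne]
          refine exists_congr fun r => and_congr ?_ ?_
          · rw [heM]
            rw [show (fun i j => barW (B.M a i j)) i r = barW (B.M a i r) from rfl]
            exact barW_ne_bot _
          · exact iha h.q xs h' tl' q hrest r j

lemma func_witness (B : MPA Sigma (Fin nB)) (w : List Sigma)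
    (hB : B.func w ≠ ⊥) :
    ∃ i j, B.I i ≠ ⊥ ∧ B.mword w i j ≠ ⊥ ∧ B.F j ≠ ⊥ := by
  have h1 : ∃ i, (Finset.univ.sup fun j => B.I i + B.mword w i j + B.F j) ≠ ⊥ := by
    by_contra hc
    push_neg at hc
    exact hB ((Finset.sup_eq_bot_iff _ _).mpr fun i _ => hc i)
  obtain ⟨i, hi⟩ := h1
  have h2 : ∃ j, B.I i + B.mword w i j + B.F j ≠ ⊥ := by
    by_contra hc
    push_neg at hc
    exact hi ((Finset.sup_eq_bot_iff _ _).mpr fun j _ => hc j)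
  obtain ⟨j, hj⟩ := h2
  refine ⟨i, j, ?_, ?_, ?_⟩ <;>
  · intro hc
    apply hj
    rw [WithBot.add_eq_bot, WithBot.add_eq_bot]
    tauto

end Aux3
/-- if `f_A(w) ≠ -∞` and `f_B(w) ≠ -∞`, every node of any factorisation tree
on `w` has a non-empty set of contributors. -/
theorem contributors_nonempty {Sigma QA : Type} [Fintype Sigma] [Fintype QA] [DecidableEq QA]
    {nB : ℕ} (A : MPA Sigma QA) (B : MPA Sigma (Fin nB)) (hdet : A.Deterministic)
    (w : List Sigma) (hA : A.func w ≠ ⊥) (hB : B.func w ≠ ⊥)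
    (t : FT QA nB) (ht : IsFactTreeOn A B w t) :
    ∀ (π : List ℕ) (c : FT QA nB), FT.subtreeAt t π = some c →
      (contributors B t π).Nonempty := by
  intro π c hsub
  obtain ⟨hwf, p, q, xs, hIp, hFq, hpl⟩ := ht
  obtain ⟨h, tl, hleaves, hlabel⟩ := label_eq_fold t hwf
  rw [hleaves] at hpl
  cases w with
  | nil =>
    cases xs with
    | nil => exact hpl.elim
    | cons _ _ => exact hpl.elim
  | cons a w' =>
    obtain ⟨i, j, hIi, hmw, hFj⟩ := func_witness B (a :: w') hB
    have hM : (FT.label t).M i j ≠ OSR.bot := by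
      rw [hlabel]
      exact (fold_support A B (a :: w') p xs h tl q hpl i j).mpr hmw
    obtain ⟨ij, hijmem, _⟩ := contrib_inv π t (rootContrib B t) hwf
      ⟨(i, j), ⟨hIi, hFj, hM⟩, hM⟩ c hsub
    exact ⟨ij, hijmem⟩
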